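/- Let f : A^V → A^V be a coding function, and let u, v be distinct vertices such that the interaction graph G(f) has no loop on u, no loop on v, and no arc from v to u. Then the reduction of f by u followed by v equals the reduction by v followed by u: f^{-uv} = f^{-vu}. -/
import Mathlib


/-- Arc `(u,i)` of the interaction graph of a coding function `f`:
the local function `f_i` depends essentially on the coordinate `x_u`. -/
def arcCF {V A : Type*} [DecidableEq V] (f : (V → A) → V → A) (u i : V) : Prop :=
  ∃ (x : V → A) (a : A), f (Function.update x u a) i ≠ f x i

/-- The `v`-reduction of a coding function: the coordinate `v` becomes the identity
(it is removed), and every other local function `f_i` has `f_v` substituted for `x_v`. -/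
def reduceCF {V A : Type*} [DecidableEq V] (f : (V → A) → V → A) (v : V) :
    (V → A) → V → A :=
  fun x i => if i = v then x i else f (Function.update x v (f x v)) i

/-- If `G(f)` has no loop on `u`, no loop on `v` and no arc from `v` to `u`,
then `f^{-uv} = f^{-vu}`. -/
theorem stmt0 {V A : Type*} [DecidableEq V] (f : (V → A) → V → A) (u v : V)
    (huv : u ≠ v) (hu : ¬ arcCF f u u) (hv : ¬ arcCF f v v) (hvu : ¬ arcCF f v u) :
    reduceCF (reduceCF f u) v = reduceCF (reduceCF f v) u := by
  have hvuI : ∀ x a, f (Function.update x v a) u = f x u := by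
    intro x a
    by_contra hne
    exact hvu ⟨x, a, hne⟩
  funext x i
  by_cases hiv : i = v
  · subst hiv
    simp [reduceCF, huv.symm, Function.update_of_ne huv.symm]
  by_cases hiu : i = u
  · subst hiu
    simp [reduceCF, huv, hiv, Function.update_of_ne huv]
  · simp only [reduceCF, if_neg hiv, if_neg hiu, if_neg huv, if_neg huv.symm]
    simp only [hvuI]
    rw [Function.update_comm huv.symm]
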